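/- Let n ≥ 2, ε ≥ 0, and let W_1, …, W_n be positive reals. Let Ŵ_1 ≤ Ŵ_2 ≤ ⋯ ≤ Ŵ_n be reals with W_i ≤ Ŵ_i ≤ W_i + ε for every i ∈ [n]. Apply the rounding procedure to Ŵ_1,…,Ŵ_n: let k be the largest index that is good for Ŵ, set D̂' = Σ_{i=1}^k Ŵ_i and Ĉ' = Σ_{i=1}^k 1/Ŵ_i, and define q̂_i = (D̂'/Ŵ_i − (k−2))/(D̂'Ĉ' − k(k−2)) for i ≤ k and q̂_i = 0 for i > k. Then for every i* ∈ [n], Σ_{i≠i*} q̂_i·(W_{i*} + W_i) ≤ (2 − 2/n)·W_{i*} + 2ε. (Lemma 3.4 / Step 3, robustness of the rounding to noisy max semi-distances.) -/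

import Mathlib

/-- An index `k` (number of hypotheses considered, indices `0, …, k−1`) is *good*
for the weights `W` if `(k−3)·W j ≤ Σ_{i < k, i ≠ j} W i` for every `j < k`. -/
def IsGoodIndex (W : ℕ → ℝ) (k : ℕ) : Prop :=
  ∀ j ∈ Finset.range k, ((k : ℝ) - 3) * W j ≤ ∑ i ∈ (Finset.range k).erase j, W i

set_option maxHeartbeats 1000000 in
/-- **Lemma 3.4 / Step 3** (robustness of the rounding to noisy max semi-distances).
Let `W` be true positive weights and `Wh 0 ≤ ⋯ ≤ Wh (n−1)` noisy estimates with
`W i ≤ Wh i ≤ W i + ε`. Apply the rounding procedure to `Wh`: `k` the largest good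
index for `Wh`, `D̂' = Σ_{i<k} Wh i`, `Ĉ' = Σ_{i<k} 1/Wh i`, and
`q̂ i = (D̂'/Wh i − (k−2))/(D̂'Ĉ' − k(k−2))` for `i < k`, `q̂ i = 0` otherwise. Then
for every `i*`, `Σ_{i≠i*} q̂ i·(W i* + W i) ≤ (2 − 2/n)·W i* + 2ε`. -/
theorem rounding_robust_to_noise (n : ℕ) (hn : 2 ≤ n) (ε : ℝ) (hε : 0 ≤ ε)
    (W Wh : ℕ → ℝ)
    (hpos : ∀ i, i < n → 0 < W i)
    (hWhmono : ∀ i j, i ≤ j → j < n → Wh i ≤ Wh j)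
    (happrox : ∀ i, i < n → W i ≤ Wh i ∧ Wh i ≤ W i + ε)
    (k : ℕ) (hk1 : 1 ≤ k) (hkn : k ≤ n)
    (hgood : IsGoodIndex Wh k)
    (hmax : ∀ k', k' ≤ n → IsGoodIndex Wh k' → k' ≤ k)
    (D' C' : ℝ)
    (hD' : D' = ∑ i ∈ Finset.range k, Wh i)
    (hC' : C' = ∑ i ∈ Finset.range k, (Wh i)⁻¹)
    (q : ℕ → ℝ)
    (hq : ∀ i, q i = if i < k then
        (D' / Wh i - ((k : ℝ) - 2)) / (D' * C' - (k : ℝ) * ((k : ℝ) - 2)) else 0) :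
    ∀ istar ∈ Finset.range n,
      ∑ i ∈ (Finset.range n).erase istar, q i * (W istar + W i)
        ≤ (2 - 2 / (n : ℝ)) * W istar + 2 * ε := by
  intro istar histar
  rw [Finset.mem_range] at histar
  set Δ : ℝ := D' * C' - (k : ℝ) * ((k : ℝ) - 2) with hΔdef
  have hn0 : (0:ℝ) < n := by positivity
  have hk0 : (0:ℝ) < k := by exact_mod_cast hk1
  -- positivity of Wh on range n
  have hWhpos : ∀ i, i < n → 0 < Wh i := fun i hi =>
    lt_of_lt_of_le (hpos i hi) (happrox i hi).1
  have hWhposk : ∀ i, i < k → 0 < Wh i := fun i hi => hWhpos i (lt_of_lt_of_le hi hkn)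
  -- Cauchy-Schwarz: k^2 ≤ D' * C'
  have hCS : ((k : ℝ)) ^ 2 ≤ D' * C' := by
    have := Finset.sum_sq_le_sum_mul_sum_of_sq_eq_mul (Finset.range k)
      (r := fun _ => (1:ℝ)) (f := Wh) (g := fun i => (Wh i)⁻¹)
      (fun i hi => (hWhposk i (Finset.mem_range.mp hi)).le)
      (fun i hi => (inv_pos.mpr (hWhposk i (Finset.mem_range.mp hi))).le)
      (fun i hi => by
        rw [one_pow, mul_inv_cancel₀ (hWhposk i (Finset.mem_range.mp hi)).ne'])
    simpa [hD', hC', Finset.card_range] using this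
  have hΔ : 0 < Δ := by
    have : 2 * (k:ℝ) ≤ Δ := by
      have : (k:ℝ)^2 - (k:ℝ) * ((k:ℝ) - 2) = 2 * k := by ring
      nlinarith [hCS]
    linarith
  -- goodness gives (k-2) * Wh i ≤ D' for i < k
  have hgd : ∀ i, i < k → ((k:ℝ) - 2) * Wh i ≤ D' := by
    intro i hi
    have h := hgood i (Finset.mem_range.mpr hi)
    rw [Finset.sum_erase_eq_sub (Finset.mem_range.mpr hi), ← hD'] at h
    linarith
  -- q is nonnegative
  have hqnonneg : ∀ i, 0 ≤ q i := by
    intro i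
    rw [hq i]
    by_cases hi : i < k
    · simp only [hi, if_true]
      apply div_nonneg _ hΔ.le
      have hWi := hWhposk i hi
      have := hgd i hi
      rw [sub_nonneg, le_div_iff₀ hWi]
      linarith
    · simp [hi]
  -- sum of q over range k is 1
  have hsum1 : ∑ i ∈ Finset.range k, q i = 1 := by
    have : ∑ i ∈ Finset.range k, q i
        = (∑ i ∈ Finset.range k, (D' * (Wh i)⁻¹ - ((k:ℝ) - 2))) / Δ := by
      rw [Finset.sum_div]
      apply Finset.sum_congr rfl
      intro i hi
      rw [hq i, if_pos (Finset.mem_range.mp hi), div_eq_mul_inv D']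
    rw [this, Finset.sum_sub_distrib, ← Finset.mul_sum, ← hC', Finset.sum_const,
      Finset.card_range, nsmul_eq_mul]
    field_simp
    exact hΔdef.symm
  -- sum of q i * Wh i over range k is 2 D' / Δ
  have hsum2 : ∑ i ∈ Finset.range k, q i * Wh i = 2 * D' / Δ := by
    have : ∑ i ∈ Finset.range k, q i * Wh i
        = (∑ i ∈ Finset.range k, (D' - ((k:ℝ) - 2) * Wh i)) / Δ := by
      rw [Finset.sum_div]
      apply Finset.sum_congr rfl
      intro i hi
      have hWi := (hWhposk i (Finset.mem_range.mp hi)).ne'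
      rw [hq i, if_pos (Finset.mem_range.mp hi)]
      field_simp
    rw [this, Finset.sum_sub_distrib, Finset.sum_const, Finset.card_range,
      nsmul_eq_mul, ← Finset.mul_sum, ← hD']
    congr 1
    ring
  -- key fraction bound
  have hfrac : 2 * ((k:ℝ) - 2) / Δ ≤ 1 - 2 / n := by
    have h2n : 2 / (n:ℝ) ≤ 1 := by
      rw [div_le_one hn0]; exact_mod_cast hn
    by_cases hk2 : k ≤ 2
    · have : ((k:ℝ) - 2) ≤ 0 := by
        have : (k:ℝ) ≤ 2 := by exact_mod_cast hk2
        linarith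
      have : 2 * ((k:ℝ) - 2) / Δ ≤ 0 :=
        div_nonpos_of_nonpos_of_nonneg (by linarith) hΔ.le
      linarith
    · push_neg at hk2
      have hk3 : (3:ℝ) ≤ k := by exact_mod_cast hk2
      have h1 : 2 * ((k:ℝ) - 2) / Δ ≤ 2 * ((k:ℝ) - 2) / (2 * k) := by
        apply div_le_div_of_nonneg_left (by linarith) (by positivity)
        have : (k:ℝ)^2 - (k:ℝ) * ((k:ℝ) - 2) = 2 * k := by ring
        nlinarith [hCS]
      have h2 : 2 * ((k:ℝ) - 2) / (2 * k) = 1 - 2 / k := by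
        field_simp
      have h3 : 2 / (n:ℝ) ≤ 2 / (k:ℝ) := by
        apply div_le_div_of_nonneg_left (by norm_num) hk0
        exact_mod_cast hkn
      linarith
  have hWhistar : 0 < Wh istar := hWhpos istar histar
  -- common finishing step
  have hfinish : Wh istar + (2 * ((k:ℝ) - 2) / Δ) * Wh istar
      ≤ (2 - 2 / (n:ℝ)) * W istar + 2 * ε := by
    have h1 : Wh istar + (2 * ((k:ℝ) - 2) / Δ) * Wh istar
        ≤ (2 - 2 / (n:ℝ)) * Wh istar := by
      have := mul_le_mul_of_nonneg_right hfrac hWhistar.le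
      nlinarith
    have h2 : Wh istar ≤ W istar + ε := (happrox istar histar).2
    have h3 : (0:ℝ) ≤ 2 - 2 / n := by
      have : 2 / (n:ℝ) ≤ 1 := by
        rw [div_le_one hn0]; exact_mod_cast hn
      linarith
    have h4 : 2 - 2 / (n:ℝ) ≤ 2 := by
      have : (0:ℝ) ≤ 2 / n := by positivity
      linarith
    nlinarith [mul_le_mul_of_nonneg_left h2 h3]
  -- the total sum over range k of q i * (Wh istar + Wh i)
  have htot : ∑ i ∈ Finset.range k, q i * (Wh istar + Wh i)
      = Wh istar + 2 * D' / Δ := by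
    have : ∑ i ∈ Finset.range k, q i * (Wh istar + Wh i)
        = (∑ i ∈ Finset.range k, q i) * Wh istar + ∑ i ∈ Finset.range k, q i * Wh i := by
      rw [Finset.sum_mul]
      rw [← Finset.sum_add_distrib]
      apply Finset.sum_congr rfl
      intro i _
      ring
    rw [this, hsum1, hsum2, one_mul]
  by_cases hik : istar < k
  case pos =>
    -- restrict sum to (range k).erase istar
    have hrestrict : ∑ i ∈ (Finset.range n).erase istar, q i * (W istar + W i)
        = ∑ i ∈ (Finset.range k).erase istar, q i * (W istar + W i) := by
      apply (Finset.sum_subset _ _).symm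
      · exact Finset.erase_subset_erase _ (Finset.range_subset_range.mpr hkn)
      · intro i hi hni
        have hine : i ≠ istar := (Finset.mem_erase.mp hi).1
        have : ¬ i < k := by
          intro h
          exact hni (Finset.mem_erase.mpr ⟨hine, Finset.mem_range.mpr h⟩)
        rw [hq i, if_neg this, zero_mul]
    rw [hrestrict]
    have hstep : ∑ i ∈ (Finset.range k).erase istar, q i * (W istar + W i)
        ≤ ∑ i ∈ (Finset.range k).erase istar, q i * (Wh istar + Wh i) := by
      apply Finset.sum_le_sum
      intro i hi
      have hik' : i < n := lt_of_lt_of_le (Finset.mem_range.mp (Finset.mem_erase.mp hi).2) hkn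
      have := (happrox i hik').1
      have := (happrox istar histar).1
      have := hqnonneg i
      nlinarith
    have herase : ∑ i ∈ (Finset.range k).erase istar, q i * (Wh istar + Wh i)
        = Wh istar + 2 * D' / Δ - q istar * (Wh istar + Wh istar) := by
      rw [Finset.sum_erase_eq_sub (Finset.mem_range.mpr hik), htot]
    have hqistar : q istar * (Wh istar + Wh istar)
        = 2 * (D' - ((k:ℝ) - 2) * Wh istar) / Δ := by
      rw [hq istar, if_pos hik]
      field_simp
      ring
    have hval : Wh istar + 2 * D' / Δ - q istar * (Wh istar + Wh istar)
        = Wh istar + (2 * ((k:ℝ) - 2) / Δ) * Wh istar := by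
      rw [hqistar]
      field_simp
      ring
    calc ∑ i ∈ (Finset.range k).erase istar, q i * (W istar + W i)
        ≤ ∑ i ∈ (Finset.range k).erase istar, q i * (Wh istar + Wh i) := hstep
      _ = Wh istar + (2 * ((k:ℝ) - 2) / Δ) * Wh istar := by rw [herase, hval]
      _ ≤ (2 - 2 / (n:ℝ)) * W istar + 2 * ε := hfinish
  case neg =>
    push_neg at hik
    have hkltn : k < n := lt_of_le_of_lt hik histar
    -- k + 1 is not good, and trivially good indices force k ≥ 3
    have hnotgood : ¬ IsGoodIndex Wh (k + 1) := by
      intro h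
      have := hmax (k + 1) hkltn h
      omega
    have hk3 : 3 ≤ k := by
      by_contra h
      push_neg at h
      apply hnotgood
      intro j hj
      have hjk : j < k + 1 := Finset.mem_range.mp hj
      have hc : ((k:ℝ) + 1 - 3) ≤ 0 := by
        have : (k:ℝ) ≤ 2 := by exact_mod_cast (by omega : k ≤ 2)
        linarith
      have hWj : 0 < Wh j := hWhpos j (by omega)
      have : (0:ℝ) ≤ ∑ i ∈ (Finset.range (k+1)).erase j, Wh i := by
        apply Finset.sum_nonneg
        intro i hi
        have : i < k + 1 := Finset.mem_range.mp (Finset.mem_erase.mp hi).2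
        exact (hWhpos i (by omega)).le
      have hc' : (((k+1 : ℕ):ℝ) - 3) ≤ 0 := by push_cast; linarith
      exact le_trans (mul_nonpos_of_nonpos_of_nonneg hc' hWj.le) this
    -- from failure of goodness at k+1 : D' ≤ (k-2) * Wh k
    have hDk : D' ≤ ((k:ℝ) - 2) * Wh k := by
      rw [IsGoodIndex] at hnotgood
      push_neg at hnotgood
      obtain ⟨j, hj, hjlt⟩ := hnotgood
      have hjk : j < k + 1 := Finset.mem_range.mp hj
      have hjn : j < n := by omega
      have hsumerase : ∑ i ∈ (Finset.range (k+1)).erase j, Wh i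
          = D' + Wh k - Wh j := by
        rw [Finset.sum_erase_eq_sub hj, Finset.sum_range_succ, ← hD']
      rw [hsumerase] at hjlt
      have hcast : ((k + 1 : ℕ):ℝ) - 3 = (k:ℝ) - 2 := by push_cast; ring
      rw [hcast] at hjlt
      have hjle : Wh j ≤ Wh k := hWhmono j k (by omega) hkltn
      have hk2 : (0:ℝ) ≤ (k:ℝ) - 2 := by
        have : (3:ℝ) ≤ k := by exact_mod_cast hk3
        linarith
      have := mul_le_mul_of_nonneg_left hjle hk2
      linarith
    have hWhk : Wh k ≤ Wh istar := hWhmono k istar hik histar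
    have hk2 : (0:ℝ) ≤ (k:ℝ) - 2 := by
      have : (3:ℝ) ≤ k := by exact_mod_cast hk3
      linarith
    -- restrict sum to range k
    have hrestrict : ∑ i ∈ (Finset.range n).erase istar, q i * (W istar + W i)
        = ∑ i ∈ Finset.range k, q i * (W istar + W i) := by
      apply (Finset.sum_subset _ _).symm
      · intro i hi
        have hik' : i < k := Finset.mem_range.mp hi
        exact Finset.mem_erase.mpr ⟨by omega, Finset.mem_range.mpr (by omega)⟩
      · intro i hi hni
        have : ¬ i < k := fun h => hni (Finset.mem_range.mpr h)
        rw [hq i, if_neg this, zero_mul]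
    rw [hrestrict]
    have hstep : ∑ i ∈ Finset.range k, q i * (W istar + W i)
        ≤ ∑ i ∈ Finset.range k, q i * (Wh istar + Wh i) := by
      apply Finset.sum_le_sum
      intro i hi
      have hik' : i < n := lt_of_lt_of_le (Finset.mem_range.mp hi) hkn
      have := (happrox i hik').1
      have := (happrox istar histar).1
      have := hqnonneg i
      nlinarith
    have hbound : Wh istar + 2 * D' / Δ
        ≤ Wh istar + (2 * ((k:ℝ) - 2) / Δ) * Wh istar := by
      have h1 : D' ≤ ((k:ℝ) - 2) * Wh istar := by nlinarith
      have : 2 * D' / Δ ≤ 2 * (((k:ℝ) - 2) * Wh istar) / Δ := by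
        gcongr
      calc Wh istar + 2 * D' / Δ ≤ Wh istar + 2 * (((k:ℝ) - 2) * Wh istar) / Δ := by linarith
        _ = Wh istar + (2 * ((k:ℝ) - 2) / Δ) * Wh istar := by ring
    calc ∑ i ∈ Finset.range k, q i * (W istar + W i)
        ≤ ∑ i ∈ Finset.range k, q i * (Wh istar + Wh i) := hstep
      _ = Wh istar + 2 * D' / Δ := htot
      _ ≤ Wh istar + (2 * ((k:ℝ) - 2) / Δ) * Wh istar := hbound
      _ ≤ (2 - 2 / (n:ℝ)) * W istar + 2 * ε := hfinish
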